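/- Fix radii ρ_0, ρ_2 > 0 and angles Θ_{01}, Θ_{02}, Θ_{12} ∈ [0, π/2]. For a configuration of three mutually intersecting disks D_0, D_1, D_2 with radii ρ_0, ρ_1, ρ_2 and pairwise dihedral angles Θ_{ij}, let Φ_0(ρ_1) denote the angle of the triangle of centers at the center of D_0. Then Φ_0 is a (weakly) monotone nondecreasing function of ρ_1. -/
import Mathlib

open Real

/-- Distance between centers of two disks of radii `a, b` meeting at dihedral
angle `θ`. -/
noncomputable def len (a b θ : ℝ) : ℝ := Real.sqrt (a ^ 2 + b ^ 2 + 2 * a * b * Real.cos θ)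

/-- Angle of the triangle of centers at the center of the disk of radius `ρ0`,
for three pairwise intersecting disks of radii `ρ0, ρ1, ρ2` with dihedral
angles `θ01, θ02, θ12`, via the law of cosines. -/
noncomputable def Phi0 (ρ0 ρ1 ρ2 θ01 θ02 θ12 : ℝ) : ℝ :=
  Real.arccos ((len ρ0 ρ1 θ01 ^ 2 + len ρ0 ρ2 θ02 ^ 2 - len ρ1 ρ2 θ12 ^ 2) /
    (2 * len ρ0 ρ1 θ01 * len ρ0 ρ2 θ02))

lemma antitone_arccos' : Antitone Real.arccos := fun x y h => by
  unfold Real.arccos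
  exact sub_le_sub_left (Real.monotone_arcsin h) _

set_option maxHeartbeats 1600000 in
lemma key_ineq (r0 r2 c1 c2 c3 a b : ℝ) (hr0 : 0 < r0) (hr2 : 0 < r2)
    (hc1 : 0 ≤ c1) (hc1' : c1 ≤ 1) (hc2 : 0 ≤ c2) (hc2' : c2 ≤ 1)
    (hc3 : 0 ≤ c3) (hc3' : c3 ≤ 1) (ha : 0 < a) (hab : a ≤ b) :
    ((r0^2 + r0*r2*c2) + (r0*c1 - r2*c3) * b) * Real.sqrt (r0^2 + a^2 + 2*r0*a*c1)
    ≤ ((r0^2 + r0*r2*c2) + (r0*c1 - r2*c3) * a) * Real.sqrt (r0^2 + b^2 + 2*r0*b*c1) := by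
  have hb : 0 < b := lt_of_lt_of_le ha hab
  set A := r0^2 + r0*r2*c2 with hA
  set B := r0*c1 - r2*c3 with hB
  have hQa : (0:ℝ) ≤ r0^2 + a^2 + 2*r0*a*c1 := by positivity
  have hQb : (0:ℝ) ≤ r0^2 + b^2 + 2*r0*b*c1 := by positivity
  set u := Real.sqrt (r0^2 + a^2 + 2*r0*a*c1) with hu
  set v := Real.sqrt (r0^2 + b^2 + 2*r0*b*c1) with hv
  have hu2 : u^2 = r0^2 + a^2 + 2*r0*a*c1 := Real.sq_sqrt hQa
  have hv2 : v^2 = r0^2 + b^2 + 2*r0*b*c1 := Real.sq_sqrt hQb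
  have hu0 : 0 ≤ u := Real.sqrt_nonneg _
  have hv0 : 0 ≤ v := Real.sqrt_nonneg _
  have hApos : 0 < A := by have : 0 ≤ r0*r2*c2 := by positivity
                           nlinarith [sq_nonneg r0, mul_pos hr0 hr0]
  have hABC : 0 ≤ A - B * (r0*c1) := by
    nlinarith [mul_nonneg (mul_nonneg hr0.le hr2.le) hc2,
      mul_nonneg (mul_nonneg (mul_nonneg hr0.le hr2.le) hc3) hc1,
      mul_nonneg (mul_pos hr0 hr0).le (mul_nonneg (sub_nonneg.2 hc1') (show (0:ℝ) ≤ 1 + c1 by linarith))]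
  have hE : 0 ≤ (A - B * (r0*c1)) * a + (A * (r0*c1) - B * r0^2) := by
    have h2 : A * (r0*c1) - B * r0^2 = r0^2*r2*(c1*c2+c3) := by rw [hA, hB]; ring
    have h3 : (0:ℝ) ≤ r0^2*r2*(c1*c2+c3) := by positivity
    have := mul_nonneg hABC ha.le
    linarith
  clear_value A B u v
  clear hA hB hu hv
  rcases le_or_gt 0 (A + B*a) with hp | hp
  · rcases le_or_gt 0 (A + B*b) with hq | hq
    · have hD : (A + B*b)^2 * u^2 ≤ (A + B*a)^2 * v^2 := by
        rw [hu2, hv2]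
        nlinarith [mul_nonneg (mul_nonneg (mul_nonneg (sub_nonneg.2 hab) (sub_nonneg.2 hab)) hp) hABC,
          mul_nonneg (mul_nonneg (sub_nonneg.2 hab) (add_nonneg hp hq)) hE]
      nlinarith [hD, mul_nonneg hp hv0, mul_nonneg hq hu0]
    · exact le_trans (mul_nonpos_of_nonpos_of_nonneg hq.le hu0) (mul_nonneg hp hv0)
  · have hBneg : B < 0 := by
      by_contra h
      push_neg at h
      linarith [mul_nonneg h ha.le]
    have hq : A + B*b < 0 := by linarith [mul_nonpos_of_nonpos_of_nonneg hBneg.le (sub_nonneg.2 hab)]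
    have hD : (A + B*a)^2 * v^2 ≤ (A + B*b)^2 * u^2 := by
      rw [hu2, hv2]
      nlinarith [mul_nonneg (mul_nonneg (mul_nonneg (sub_nonneg.2 hab) (sub_nonneg.2 hab)) (neg_nonneg.2 hp.le)) hABC,
        mul_nonneg (mul_nonneg (sub_nonneg.2 hab) (show (0:ℝ) ≤ -((A + B*a) + (A + B*b)) by linarith)) hE]
    nlinarith [hD, mul_nonneg (neg_nonneg.2 hp.le) hv0, mul_nonneg (neg_nonneg.2 hq.le) hu0]

/-- With `ρ0, ρ2 > 0` and angles in `[0, π/2]` fixed, `Φ₀` is a (weakly)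
monotone nondecreasing function of `ρ1` on `(0, ∞)`. -/
theorem stmt1 (ρ0 ρ2 θ01 θ02 θ12 : ℝ) (h0 : 0 < ρ0) (h2 : 0 < ρ2)
    (h01 : θ01 ∈ Set.Icc 0 (π / 2)) (h02 : θ02 ∈ Set.Icc 0 (π / 2))
    (h12 : θ12 ∈ Set.Icc 0 (π / 2)) :
    MonotoneOn (fun ρ1 => Phi0 ρ0 ρ1 ρ2 θ01 θ02 θ12) (Set.Ioi 0) := by
  have hpi := Real.pi_pos
  have hc01 : 0 ≤ Real.cos θ01 := Real.cos_nonneg_of_mem_Icc ⟨by linarith [h01.1], h01.2⟩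
  have hc02 : 0 ≤ Real.cos θ02 := Real.cos_nonneg_of_mem_Icc ⟨by linarith [h02.1], h02.2⟩
  have hc12 : 0 ≤ Real.cos θ12 := Real.cos_nonneg_of_mem_Icc ⟨by linarith [h12.1], h12.2⟩
  intro a ha b hb hab
  simp only [Set.mem_Ioi] at ha hb
  simp only [Phi0, len]
  apply antitone_arccos'
  have hQa : (0:ℝ) ≤ ρ0^2 + a^2 + 2*ρ0*a*Real.cos θ01 := by positivity
  have hQb : (0:ℝ) ≤ ρ0^2 + b^2 + 2*ρ0*b*Real.cos θ01 := by positivity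
  have hL2 : (0:ℝ) ≤ ρ0^2 + ρ2^2 + 2*ρ0*ρ2*Real.cos θ02 := by positivity
  have hMa : (0:ℝ) ≤ a^2 + ρ2^2 + 2*a*ρ2*Real.cos θ12 := by positivity
  have hMb : (0:ℝ) ≤ b^2 + ρ2^2 + 2*b*ρ2*Real.cos θ12 := by positivity
  have hupos : 0 < Real.sqrt (ρ0^2 + a^2 + 2*ρ0*a*Real.cos θ01) :=
    Real.sqrt_pos.2 (by positivity)
  have hvpos : 0 < Real.sqrt (ρ0^2 + b^2 + 2*ρ0*b*Real.cos θ01) :=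
    Real.sqrt_pos.2 (by positivity)
  have hLpos : 0 < Real.sqrt (ρ0^2 + ρ2^2 + 2*ρ0*ρ2*Real.cos θ02) :=
    Real.sqrt_pos.2 (by positivity)
  rw [Real.sq_sqrt hQa, Real.sq_sqrt hQb, Real.sq_sqrt hL2, Real.sq_sqrt hMa, Real.sq_sqrt hMb]
  rw [div_le_div_iff₀ (by positivity) (by positivity)]
  have hkey := key_ineq ρ0 ρ2 (Real.cos θ01) (Real.cos θ02) (Real.cos θ12) a b h0 h2
    hc01 (Real.cos_le_one _) hc02 (Real.cos_le_one _) hc12 (Real.cos_le_one _) ha hab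
  nlinarith [mul_le_mul_of_nonneg_right hkey hLpos.le]
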